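/- arXiv:1302.0776 — 4 statements merged into one kernel-verified Lean document; each statement's English description precedes it below -/
import Mathlib

section
/- Let g ≥ 2 and l, w₁, w₂ positive integers with gcd(w₁,w₂)=1 and w₁ > w₂. Then the cubic polynomial P(c) = l·w₁²·c³ − (1 − g − 2l·w₂)·w₁·c² − (g − 1 + 2l·w₁)·w₂·c − l·w₂² has exactly one positive real root c_w, and moreover c_w is not equal to 1 and satisfies w₂/w₁ < c_w < 1. -/
theorem stmt_4 (g l w₁ w₂ : ℤ) (hg : 2 ≤ g) (hl : 0 < l)
    (hw₁ : 0 < w₁) (hw₂ : 0 < w₂) (hcop : Int.gcd w₁ w₂ = 1) (hw : w₂ < w₁) :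
    (∃! c : ℝ, 0 < c ∧
      (l : ℝ) * (w₁ : ℝ) ^ 2 * c ^ 3 - (1 - (g : ℝ) - 2 * l * w₂) * w₁ * c ^ 2
        - ((g : ℝ) - 1 + 2 * l * w₁) * w₂ * c - (l : ℝ) * (w₂ : ℝ) ^ 2 = 0) ∧
    (∀ c : ℝ, 0 < c →
      (l : ℝ) * (w₁ : ℝ) ^ 2 * c ^ 3 - (1 - (g : ℝ) - 2 * l * w₂) * w₁ * c ^ 2
        - ((g : ℝ) - 1 + 2 * l * w₁) * w₂ * c - (l : ℝ) * (w₂ : ℝ) ^ 2 = 0 →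
      c ≠ 1 ∧ (w₂ : ℝ) / (w₁ : ℝ) < c ∧ c < 1) := by
  have hgR : (2:ℝ) ≤ (g:ℝ) := by exact_mod_cast hg
  have hlR : (0:ℝ) < (l:ℝ) := by exact_mod_cast hl
  have h1R : (0:ℝ) < (w₁:ℝ) := by exact_mod_cast hw₁
  have h2R : (0:ℝ) < (w₂:ℝ) := by exact_mod_cast hw₂
  have hwR : (w₂:ℝ) < (w₁:ℝ) := by exact_mod_cast hw
  set f : ℝ → ℝ := fun c =>
    (l : ℝ) * (w₁ : ℝ) ^ 2 * c ^ 3 - (1 - (g : ℝ) - 2 * l * w₂) * w₁ * c ^ 2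
      - ((g : ℝ) - 1 + 2 * l * w₁) * w₂ * c - (l : ℝ) * (w₂ : ℝ) ^ 2 with hf
  have hfc : ∀ c : ℝ, f c =
      (l : ℝ) * (w₁ : ℝ) ^ 2 * c ^ 3 - (1 - (g : ℝ) - 2 * l * w₂) * w₁ * c ^ 2
      - ((g : ℝ) - 1 + 2 * l * w₁) * w₂ * c - (l : ℝ) * (w₂ : ℝ) ^ 2 := fun c => rfl
  -- key monotonicity-type inequality
  have key : ∀ a b : ℝ, 0 < a → a < b → b ^ 2 * f a < a ^ 2 * f b := by
    intro a b ha hab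
    have hb : 0 < b := ha.trans hab
    have hab' : 0 < a * b := mul_pos ha hb
    have hid : b ^ 2 * f a - a ^ 2 * f b
        = (a - b) * ((l:ℝ) * (w₁:ℝ)^2 * (a*b)^2 + ((g:ℝ) - 1 + 2*l*w₁) * w₂ * (a*b)
           + (l:ℝ) * (w₂:ℝ)^2 * (a + b)) := by
      simp only [hfc]; ring
    have hC : (0:ℝ) < ((g:ℝ) - 1 + 2*l*w₁) * w₂ := by
      have h2lw : (0:ℝ) < (l:ℝ) * (w₁:ℝ) := mul_pos hlR h1R
      have : (0:ℝ) < (g:ℝ) - 1 + 2*l*w₁ := by nlinarith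
      exact mul_pos this h2R
    have hbr : (0:ℝ) < (l:ℝ) * (w₁:ℝ)^2 * (a*b)^2 + ((g:ℝ) - 1 + 2*l*w₁) * w₂ * (a*b)
        + (l:ℝ) * (w₂:ℝ)^2 * (a + b) := by
      have t1 : (0:ℝ) < (l:ℝ) * (w₁:ℝ)^2 * (a*b)^2 :=
        mul_pos (mul_pos hlR (pow_pos h1R 2)) (pow_pos hab' 2)
      have t2 : (0:ℝ) < ((g:ℝ) - 1 + 2*l*w₁) * w₂ * (a*b) := mul_pos hC hab'
      have t3 : (0:ℝ) < (l:ℝ) * (w₂:ℝ)^2 * (a + b) :=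
        mul_pos (mul_pos hlR (pow_pos h2R 2)) (by linarith)
      linarith
    have hneg : b ^ 2 * f a - a ^ 2 * f b < 0 := by
      rw [hid]; exact mul_neg_of_neg_of_pos (by linarith) hbr
    linarith
  -- value at 1
  have h1val : f 1 = ((w₁:ℝ) - w₂) * ((l:ℝ) * ((w₁:ℝ) + w₂) + (g:ℝ) - 1) := by
    simp only [hfc]; ring
  have hQ1 : 0 < f 1 := by
    rw [h1val]
    have : (0:ℝ) < (l:ℝ) * ((w₁:ℝ) + w₂) := mul_pos hlR (by linarith)
    exact mul_pos (by linarith) (by linarith)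
  -- value at w₂/w₁
  have hrval : f ((w₂:ℝ) / (w₁:ℝ)) = 3 * (l:ℝ) * (w₂:ℝ)^2 * ((w₂:ℝ) - (w₁:ℝ)) / (w₁:ℝ) := by
    simp only [hfc]
    field_simp
    ring
  have hQr : f ((w₂:ℝ) / (w₁:ℝ)) < 0 := by
    rw [hrval]
    apply div_neg_of_neg_of_pos _ h1R
    have : (0:ℝ) < 3 * (l:ℝ) * (w₂:ℝ)^2 := by positivity
    nlinarith
  -- existence via IVT
  have hrlt1 : (w₂:ℝ) / (w₁:ℝ) < 1 := (div_lt_one h1R).2 hwR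
  have hrpos : (0:ℝ) < (w₂:ℝ) / (w₁:ℝ) := div_pos h2R h1R
  have hcont : ContinuousOn f (Set.Icc ((w₂:ℝ)/(w₁:ℝ)) 1) := by
    apply Continuous.continuousOn
    rw [hf]
    continuity
  obtain ⟨c, hcmem, hc0⟩ := intermediate_value_Ioo hrlt1.le hcont ⟨hQr, hQ1⟩
  have hcpos : 0 < c := hrpos.trans hcmem.1
  -- bounds for any positive root
  have bound : ∀ y : ℝ, 0 < y → f y = 0 → y ≠ 1 ∧ (w₂:ℝ)/(w₁:ℝ) < y ∧ y < 1 := by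
    intro y hy hyf
    have hy1 : y < 1 := by
      by_contra h
      push_neg at h
      rcases eq_or_lt_of_le h with h | h
      · rw [← h] at hyf; linarith
      · have hk := key 1 y one_pos h
        rw [hyf] at hk
        simp only [mul_zero, one_pow, one_mul] at hk
        have := mul_pos (pow_pos hy 2) hQ1
        linarith
    have hyr : (w₂:ℝ)/(w₁:ℝ) < y := by
      by_contra h
      push_neg at h
      rcases eq_or_lt_of_le h with h | h
      · rw [h] at hyf; linarith
      · have hk := key y ((w₂:ℝ)/(w₁:ℝ)) hy h
        rw [hyf] at hk
        simp only [mul_zero] at hk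
        have := mul_nonpos_of_nonneg_of_nonpos (sq_nonneg y) hQr.le
        linarith
    exact ⟨ne_of_lt hy1, hyr, hy1⟩
  constructor
  · refine ⟨c, ⟨hcpos, by rw [← hfc c]; exact hc0⟩, ?_⟩
    rintro y ⟨hy, hyeq⟩
    have hyf : f y = 0 := by rw [hfc]; exact hyeq
    rcases lt_trichotomy y c with h | h | h
    · have hk := key y c hy h
      rw [hyf, hc0] at hk
      simp at hk
    · exact h
    · have hk := key c y hcpos h
      rw [hyf, hc0] at hk
      simp at hk
  · intro y hy hyeq
    exact bound y hy (by rw [hfc]; exact hyeq)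
end

section
/- Consider the cubic 144c³ + 12(g+1)c² − (23+g)c − 1 = 0 for an integer g ≥ 2. When g = 2 it has the rational root c = 1/3, when g = 23 it has the rational root c = 1/6, and for all other integers g ≥ 2 it has no rational root. -/
theorem stmt_8 (g : ℤ) (hg : 2 ≤ g) :
    (g = 2 → 144 * (1 / 3 : ℚ) ^ 3 + 12 * ((g : ℚ) + 1) * (1 / 3 : ℚ) ^ 2
      - (23 + (g : ℚ)) * (1 / 3 : ℚ) - 1 = 0) ∧
    (g = 23 → 144 * (1 / 6 : ℚ) ^ 3 + 12 * ((g : ℚ) + 1) * (1 / 6 : ℚ) ^ 2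
      - (23 + (g : ℚ)) * (1 / 6 : ℚ) - 1 = 0) ∧
    (g ≠ 2 → g ≠ 23 → ∀ c : ℚ,
      144 * c ^ 3 + 12 * ((g : ℚ) + 1) * c ^ 2 - (23 + (g : ℚ)) * c - 1 ≠ 0) := by
  refine ⟨?_, ?_, ?_⟩
  · rintro rfl; norm_num
  · rintro rfl; norm_num
  · intro hg2 hg23 c h
    set n : ℤ := c.num with hn
    set d : ℤ := (c.den : ℤ) with hd
    have hd0 : (0:ℤ) < d := by rw [hd]; exact_mod_cast c.pos
    have hdq : (d:ℚ) ≠ 0 := by positivity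
    have hcq : (c:ℚ) = (n:ℚ) / (d:ℚ) := by
      rw [hn, hd]; exact_mod_cast (Rat.num_div_den c).symm
    rw [hcq] at h
    have hcop : IsCoprime n d := by
      rw [Int.isCoprime_iff_gcd_eq_one]
      exact c.reduced
    clear_value n d
    clear hcq hn hd
    have key : 144 * n ^ 3 + 12 * (g + 1) * n ^ 2 * d - (23 + g) * n * d ^ 2 - d ^ 3 = 0 := by
      have h2 : ((144 * n ^ 3 + 12 * (g + 1) * n ^ 2 * d - (23 + g) * n * d ^ 2 - d ^ 3 : ℤ) : ℚ) = 0 := by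
        have h3 : (d:ℚ)^3 * (144 * (n:ℚ) ^ 3 + 12 * ((g:ℚ) + 1) * (n:ℚ) ^ 2 * (d:ℚ)
            - (23 + (g:ℚ)) * (n:ℚ) * (d:ℚ) ^ 2 - (d:ℚ) ^ 3) / (d:ℚ)^3 = 0 := by
          rw [div_eq_zero_iff]
          left
          field_simp at h
          linear_combination (d:ℚ)^3 * h
        rw [mul_comm] at h3
        rw [mul_div_cancel_right₀ _ (pow_ne_zero 3 hdq)] at h3
        push_cast
        linear_combination h3
      exact_mod_cast h2
    have hnd : n ∣ d ^ 3 := by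
      refine ⟨144 * n ^ 2 + 12 * (g + 1) * n * d - (23 + g) * d ^ 2, ?_⟩
      linarith [key]
    have hdn : d ∣ 144 * n ^ 3 := by
      refine ⟨-(12 * (g + 1) * n ^ 2) + (23 + g) * n * d + d ^ 2, ?_⟩
      linarith [key]
    have hn1 : n = 1 ∨ n = -1 := by
      have := (hcop.pow_right (n := 3)).isUnit_of_dvd hnd
      exact Int.isUnit_iff.mp this
    have hd144 : d ∣ 144 := (hcop.symm.pow_right (n := 3)).dvd_of_dvd_mul_right hdn
    have hdle : d ≤ 144 := Int.le_of_dvd (by norm_num) hd144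
    rcases hn1 with rfl | rfl <;>
      interval_cases d <;> omega
end

section
/- Let D(c) = 16c²(37 + 5820c + 197748c² − 1528416c³ + 1622592c⁴). Then there exists a real number ĉ with 0.7 < ĉ < 0.8 such that D(c) < 0 for all c ∈ (0.22, ĉ) and D(c) ≥ 0 for all c ≥ ĉ. -/
theorem stmt_18 :
    ∃ chat : ℝ, 0.7 < chat ∧ chat < 0.8 ∧
      (∀ c : ℝ, 0.22 < c → c < chat →
        16 * c ^ 2 * (37 + 5820 * c + 197748 * c ^ 2
          - 1528416 * c ^ 3 + 1622592 * c ^ 4) < 0) ∧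
      (∀ c : ℝ, chat ≤ c →
        0 ≤ 16 * c ^ 2 * (37 + 5820 * c + 197748 * c ^ 2
          - 1528416 * c ^ 3 + 1622592 * c ^ 4)) := by
  set q : ℝ → ℝ := fun c => 37 + 5820 * c + 197748 * c ^ 2
      - 1528416 * c ^ 3 + 1622592 * c ^ 4 with hq
  have hmono : ∀ a b : ℝ, 0.7 ≤ a → a < b → q a < q b := by
    intro a b ha hab
    have hb : 0.7 ≤ b := by linarith
    have h1 : 0 < b - a := by linarith
    simp only [hq]
    nlinarith [mul_nonneg (sub_nonneg.2 ha) (sub_nonneg.2 hb),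
      sq_nonneg (a - 0.7), sq_nonneg (b - 0.7),
      mul_nonneg h1.le (mul_nonneg (sub_nonneg.2 ha) (sub_nonneg.2 hb)),
      mul_nonneg h1.le (mul_nonneg (mul_nonneg (sub_nonneg.2 ha) (sub_nonneg.2 hb)) (sub_nonneg.2 ha)),
      mul_nonneg h1.le (sq_nonneg (a - 0.7)), mul_nonneg h1.le (sq_nonneg (b - 0.7)),
      mul_nonneg h1.le (sq_nonneg (a + b - 1.4))]
  have hcont : Continuous q := by fun_prop
  have h07 : q 0.7 < 0 := by norm_num [hq]
  have h08 : 0 < q 0.8 := by norm_num [hq]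
  obtain ⟨chat, hmem, hroot⟩ :=
    intermediate_value_Icc (by norm_num : (0.7:ℝ) ≤ 0.8) hcont.continuousOn
      (Set.mem_Icc.2 ⟨h07.le, h08.le⟩)
  have hlt : 0.7 < chat := by
    rcases lt_or_eq_of_le hmem.1 with h | h
    · exact h
    · exfalso; rw [← h] at hroot; linarith
  have hrt : chat < 0.8 := by
    rcases lt_or_eq_of_le hmem.2 with h | h
    · exact h
    · exfalso; rw [h] at hroot; linarith
  refine ⟨chat, hlt, hrt, ?_, ?_⟩
  · intro c hc1 hc2
    have hqc : q c < 0 := by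
      rcases le_or_gt c 0.7 with h | h
      · simp only [hq]
        nlinarith [mul_nonneg (sub_nonneg.2 hc1.le) (sub_nonneg.2 h),
          sq_nonneg (c - 0.22), sq_nonneg (c - 0.7), sq_nonneg (c - 0.46),
          mul_nonneg (mul_nonneg (sub_nonneg.2 hc1.le) (sub_nonneg.2 h)) (sq_nonneg (c - 0.46)),
          mul_nonneg (mul_nonneg (sub_nonneg.2 hc1.le) (sub_nonneg.2 h)) (sub_nonneg.2 hc1.le),
          mul_nonneg (mul_nonneg (sub_nonneg.2 hc1.le) (sub_nonneg.2 h)) (sub_nonneg.2 h)]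
      · have := hmono c chat h.le hc2
        rw [hroot] at this; exact this
    have hc0 : (0:ℝ) < 16 * c ^ 2 := by
      have : (0:ℝ) < c := by linarith
      positivity
    have := mul_neg_of_pos_of_neg hc0 hqc
    simpa [hq] using this
  · intro c hcc
    have hqc : 0 ≤ q c := by
      rcases eq_or_lt_of_le hcc with h | h
      · rw [← h, hroot]
      · have := hmono chat c hlt.le h
        rw [hroot] at this; exact this.le
    have : 0 ≤ 16 * c ^ 2 * q c := mul_nonneg (by positivity) hqc
    simpa [hq] using this
end

section
/- Let g, l, w₁, w₂ be positive integers with g ≤ 1 + 3l·min(w₁, w₂), and let c > 0 be real. Then for all 𝑧 ∈ (−1,1), the quantity l·w₂³(1−𝑧)² + w₂²(1−𝑧)(7l·w₁ + 1 − g + (1 − g − l·w₁)𝑧)·c + 2w₁w₂(g − 1 + 2l(w₁+w₂) + l(w₂−w₁)𝑧 + (1 − g − l(w₁+w₂))𝑧²)·c² + w₁²(1+𝑧)(1 − g + 7l·w₂ + (g − 1 + l·w₂)𝑧)·c³ + l·w₁³(1+𝑧)²·c⁴ is strictly positive. -/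
theorem stmt_19 (g l w₁ w₂ : ℤ) (hg : 0 < g) (hl : 0 < l)
    (hw₁ : 0 < w₁) (hw₂ : 0 < w₂) (hbound : g ≤ 1 + 3 * l * min w₁ w₂)
    (c : ℝ) (hc : 0 < c) (z : ℝ) (hz : z ∈ Set.Ioo (-1 : ℝ) 1) :
    0 < (l : ℝ) * (w₂ : ℝ) ^ 3 * (1 - z) ^ 2
      + (w₂ : ℝ) ^ 2 * (1 - z) * (7 * (l : ℝ) * (w₁ : ℝ) + 1 - (g : ℝ)
          + (1 - (g : ℝ) - (l : ℝ) * (w₁ : ℝ)) * z) * c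
      + 2 * (w₁ : ℝ) * (w₂ : ℝ) * ((g : ℝ) - 1 + 2 * (l : ℝ) * ((w₁ : ℝ) + (w₂ : ℝ))
          + (l : ℝ) * ((w₂ : ℝ) - (w₁ : ℝ)) * z
          + (1 - (g : ℝ) - (l : ℝ) * ((w₁ : ℝ) + (w₂ : ℝ))) * z ^ 2) * c ^ 2
      + (w₁ : ℝ) ^ 2 * (1 + z) * (1 - (g : ℝ) + 7 * (l : ℝ) * (w₂ : ℝ)
          + ((g : ℝ) - 1 + (l : ℝ) * (w₂ : ℝ)) * z) * c ^ 3
      + (l : ℝ) * (w₁ : ℝ) ^ 3 * (1 + z) ^ 2 * c ^ 4 := by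
  obtain ⟨hz1, hz2⟩ := hz
  have hb1 : (g : ℝ) ≤ 1 + 3 * (l : ℝ) * (w₁ : ℝ) := by
    have h : g ≤ 1 + 3 * l * w₁ := hbound.trans (by nlinarith [min_le_left w₁ w₂])
    exact_mod_cast h
  have hb2 : (g : ℝ) ≤ 1 + 3 * (l : ℝ) * (w₂ : ℝ) := by
    have h : g ≤ 1 + 3 * l * w₂ := hbound.trans (by nlinarith [min_le_right w₁ w₂])
    exact_mod_cast h
  have hgR : (1 : ℝ) ≤ (g : ℝ) := by exact_mod_cast hg
  have hlR : (0 : ℝ) < (l : ℝ) := by exact_mod_cast hl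
  have hw1R : (0 : ℝ) < (w₁ : ℝ) := by exact_mod_cast hw₁
  have hw2R : (0 : ℝ) < (w₂ : ℝ) := by exact_mod_cast hw₂
  have h1z : (0 : ℝ) < 1 - z := by linarith
  have h2z : (0 : ℝ) < 1 + z := by linarith
  have t0 : 0 < (l : ℝ) * (w₂ : ℝ) ^ 3 * (1 - z) ^ 2 := by positivity
  have t4 : 0 < (l : ℝ) * (w₁ : ℝ) ^ 3 * (1 + z) ^ 2 * c ^ 4 := by positivity
  have hL1 : 0 ≤ 7 * (l : ℝ) * (w₁ : ℝ) + 1 - (g : ℝ)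
      + (1 - (g : ℝ) - (l : ℝ) * (w₁ : ℝ)) * z := by
    nlinarith [mul_nonneg (mul_pos hlR hw1R).le h1z.le,
      mul_nonneg (sub_nonneg.2 hb1) h2z.le]
  have hL3 : 0 ≤ 1 - (g : ℝ) + 7 * (l : ℝ) * (w₂ : ℝ)
      + ((g : ℝ) - 1 + (l : ℝ) * (w₂ : ℝ)) * z := by
    nlinarith [mul_nonneg (mul_pos hlR hw2R).le h2z.le,
      mul_nonneg (sub_nonneg.2 hb2) h1z.le]
  have t1 : 0 ≤ (w₂ : ℝ) ^ 2 * (1 - z) * (7 * (l : ℝ) * (w₁ : ℝ) + 1 - (g : ℝ)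
      + (1 - (g : ℝ) - (l : ℝ) * (w₁ : ℝ)) * z) * c := by
    have := mul_nonneg (mul_nonneg (mul_nonneg (by positivity : (0:ℝ) ≤ (w₂:ℝ)^2) h1z.le) hL1) hc.le
    linarith
  have t3 : 0 ≤ (w₁ : ℝ) ^ 2 * (1 + z) * (1 - (g : ℝ) + 7 * (l : ℝ) * (w₂ : ℝ)
      + ((g : ℝ) - 1 + (l : ℝ) * (w₂ : ℝ)) * z) * c ^ 3 := by
    have := mul_nonneg (mul_nonneg (mul_nonneg (by positivity : (0:ℝ) ≤ (w₁:ℝ)^2) h2z.le) hL3)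
      (by positivity : (0:ℝ) ≤ c ^ 3)
    linarith
  have hQ : 0 < (g : ℝ) - 1 + 2 * (l : ℝ) * ((w₁ : ℝ) + (w₂ : ℝ))
      + (l : ℝ) * ((w₂ : ℝ) - (w₁ : ℝ)) * z
      + (1 - (g : ℝ) - (l : ℝ) * ((w₁ : ℝ) + (w₂ : ℝ))) * z ^ 2 := by
    nlinarith [mul_pos (mul_pos hlR hw1R) h1z, mul_pos (mul_pos hlR hw2R) h2z,
      mul_nonneg (by nlinarith : (0:ℝ) ≤ (g:ℝ) - 1 + (l:ℝ) * ((w₁:ℝ) + (w₂:ℝ)))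
        (mul_pos h1z h2z).le]
  have t2 : 0 < 2 * (w₁ : ℝ) * (w₂ : ℝ) * ((g : ℝ) - 1 + 2 * (l : ℝ) * ((w₁ : ℝ) + (w₂ : ℝ))
      + (l : ℝ) * ((w₂ : ℝ) - (w₁ : ℝ)) * z
      + (1 - (g : ℝ) - (l : ℝ) * ((w₁ : ℝ) + (w₂ : ℝ))) * z ^ 2) * c ^ 2 := by
    have h2 : (0:ℝ) < 2 * (w₁ : ℝ) * (w₂ : ℝ) := by positivity
    exact mul_pos (mul_pos h2 hQ) (by positivity)
  linarith
end
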